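/- For every real number D > 0, the alternating series ∑_{k=1}^∞ (-1)^{k-1} · √(12·D²) / ((2k-1)·3^{k-1}) converges to π·D, the circumference of a circle of diameter D. -/

import Mathlib

theorem stmt_1 (D : ℝ) (hD : 0 < D) :
    HasSum (fun k : ℕ =>
      (-1 : ℝ) ^ k * Real.sqrt (12 * D ^ 2) / ((2 * ((k : ℝ) + 1) - 1) * 3 ^ k))
      (Real.pi * D) := by
  have h3 : (0:ℝ) < Real.sqrt 3 := Real.sqrt_pos.mpr (by norm_num)
  have hx : ‖(Real.sqrt 3)⁻¹‖ < 1 := by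
    rw [Real.norm_eq_abs, abs_of_pos (by positivity)]
    rw [inv_lt_one_iff₀]
    right
    nlinarith [Real.sq_sqrt (by norm_num : (3:ℝ) ≥ 0)]
  have harctan : Real.arctan (Real.sqrt 3)⁻¹ = Real.pi / 6 := by
    refine Real.arctan_eq_of_tan_eq ?_ ?_
    · rw [Real.tan_pi_div_six, one_div]
    · constructor <;> nlinarith [Real.pi_pos]
  have h := (Real.hasSum_arctan hx).mul_left (6 * D)
  rw [harctan] at h
  have hsq3 : Real.sqrt 3 ^ 2 = 3 := Real.sq_sqrt (by norm_num)
  have h12 : Real.sqrt (12 * D ^ 2) = 2 * Real.sqrt 3 * D := by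
    rw [show (12 : ℝ) * D ^ 2 = (2 * Real.sqrt 3 * D) ^ 2 by nlinarith]
    exact Real.sqrt_sq (by positivity)
  have h' : HasSum (fun i : ℕ => 6 * D * ((-1 : ℝ) ^ i * (Real.sqrt 3)⁻¹ ^ (2 * i + 1) / ↑(2 * i + 1))) (Real.pi * D) := by
    rw [show 6 * D * (Real.pi / 6) = Real.pi * D by ring] at h; exact h
  convert h' using 1
  funext k
  rw [h12]
  push_cast
  rw [pow_succ, pow_mul, inv_pow, hsq3]
  field_simp
  ring_nf
  rw [hsq3]
  have hne : ((k : ℝ) * 3 ^ k * 2 + 3 ^ k) ≠ 0 := by positivity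
  field_simp
  have h1 : ((1:ℝ)/3)^k * 3^k = 1 := by rw [← mul_pow]; norm_num
  linear_combination (-(12 * (k:ℝ) + 6)) * h1
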